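/- Let G be a group, K a subgroup with |x^G| ≤ n for all x ∈ K, and H = ⟨K^G⟩ the normal closure of K. Let X = ⋃_{g∈G} K^g and let m be the maximum of the indices [H : C_H(x)] over x ∈ K. Then for every x ∈ X, the subgroup [H, x] generated by commutators [h, x] with h ∈ H has finite order bounded in terms of m. -/

import Mathlib

open Subgroup
open scoped commutatorElement

namespace Stmt2Aux


variable {G : Type} [Group G]

/-- If conjugation by `g` maps `s` into `closure s`, it maps `closure s` into itself. -/
lemma conj_mem_closure_of {s : Set G} (g : G) (hg : ∀ v ∈ s, g * v * g⁻¹ ∈ Subgroup.closure s)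
    {w : G} (hw : w ∈ Subgroup.closure s) : g * w * g⁻¹ ∈ Subgroup.closure s := by
  have h : Subgroup.closure s ≤ (Subgroup.closure s).comap ((MulAut.conj g).toMonoidHom) := by
    rw [Subgroup.closure_le]
    intro v hv
    simpa [Subgroup.mem_comap, MulAut.conj_apply] using hg v hv
  simpa [Subgroup.mem_comap, MulAut.conj_apply] using h hw

lemma mem_centralizer_singleton_iff {y z : G} :
    z ∈ Subgroup.centralizer {y} ↔ y * z = z * y := by
  rw [Subgroup.mem_centralizer_iff]
  simp

/-- If a set `s` maps into the range of a function from a finite type, it is finite with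
bounded cardinality. -/
lemma card_le_of_maps_into {α β : Type} [Finite α] (f : α → β) (s : Set β)
    (h : s ⊆ Set.range f) : s.Finite ∧ Nat.card s ≤ Nat.card α := by
  have hr : (Set.range f).Finite := Set.finite_range f
  have hs : s.Finite := hr.subset h
  constructor
  · exact hs
  · have h1 : Nat.card s = s.ncard := Nat.card_coe_set_eq s
    have h2 : s.ncard ≤ (Set.range f).ncard := Set.ncard_le_ncard h hr
    have h3 : (Set.range f).ncard = Nat.card (Set.range f) := (Nat.card_coe_set_eq _).symm
    have h4 : Nat.card (Set.range f) ≤ Nat.card α :=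
      Nat.card_le_card_of_surjective _ Set.rangeFactorization_surjective
    omega

/-- A subgroup whose elements commute with all generators is (inside the closure) central. -/
lemma subgroupOf_le_center_of_commute {A : Set G} {Z : Subgroup G}
    (hZ : ∀ b ∈ A, ∀ z ∈ Z, b * z = z * b) :
    Z.subgroupOf (Subgroup.closure A) ≤ Subgroup.center ↥(Subgroup.closure A) := by
  intro z hz
  rw [Subgroup.mem_subgroupOf] at hz
  rw [Subgroup.mem_center_iff]
  rintro ⟨g, hg⟩
  apply Subtype.ext
  show g * z = (z : G) * g
  induction hg using Subgroup.closure_induction with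
  | mem b hb => exact (hZ b hb z hz).symm ▸ (hZ b hb z hz)
  | one => simp
  | mul u v hu hv hu' hv' => rw [mul_assoc, hv', ← mul_assoc, hu', mul_assoc]
  | inv u hu hu' =>
      calc u⁻¹ * (z : G) = u⁻¹ * z * u * u⁻¹ := by group
        _ = u⁻¹ * (z * u) * u⁻¹ := by rw [mul_assoc u⁻¹ (z:G) u]
        _ = u⁻¹ * (u * z) * u⁻¹ := by rw [← hu']
        _ = (z : G) * u⁻¹ := by group



variable {G : Type} [Group G]

lemma memCentralizerSingleton {y z : G} :
    z ∈ Subgroup.centralizer {y} ↔ y * z = z * y := by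
  rw [Subgroup.mem_centralizer_iff]; simp

/-- The commutator value `⁅h,x⁆` only depends on the coset of the centralizer of `x`. -/
noncomputable def commMap (H : Subgroup G) (x : G) :
    (↥H ⧸ (Subgroup.centralizer {x}).subgroupOf H) → G := fun q =>
  Quotient.liftOn' q (fun h => ⁅(h : G), x⁆) (by
    intro h₁ h₂ hr
    rw [QuotientGroup.leftRel_apply] at hr
    rw [Subgroup.mem_subgroupOf] at hr
    have hc : x * ((h₁⁻¹ * h₂ : ↥H) : G) = ((h₁⁻¹ * h₂ : ↥H) : G) * x :=
      memCentralizerSingleton.mp hr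
    set c : G := ((h₁⁻¹ * h₂ : ↥H) : G) with hcdef
    have h2 : (h₂ : G) = (h₁ : G) * c := by
      simp [hcdef, mul_assoc]
    have hcx : c * x * c⁻¹ = x := by
      rw [mul_inv_eq_iff_eq_mul, ← hc]
    show ⁅(h₁ : G), x⁆ = ⁅(h₂ : G), x⁆
    rw [h2]
    calc ⁅(h₁ : G), x⁆ = (h₁ : G) * x * (h₁ : G)⁻¹ * x⁻¹ := by rw [commutatorElement_def]
      _ = (h₁ : G) * (c * x * c⁻¹) * (h₁ : G)⁻¹ * x⁻¹ := by rw [hcx]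
      _ = ⁅(h₁ : G) * c, x⁆ := by rw [commutatorElement_def]; group)

lemma commMap_mk (H : Subgroup G) (x : G) (h : ↥H) :
    commMap H x (QuotientGroup.mk h) = ⁅(h : G), x⁆ := rfl

lemma finite_quot_of_relindex_ne_zero (H K : Subgroup G) (h : K.relIndex H ≠ 0) :
    Finite (↥H ⧸ K.subgroupOf H) := by
  apply Nat.finite_of_card_ne_zero
  rwa [← Subgroup.index_eq_card]

lemma card_quot_eq_relindex (H K : Subgroup G) :
    Nat.card (↥H ⧸ K.subgroupOf H) = K.relIndex H := (Subgroup.index_eq_card _).symm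

/-- relindex of centralizers in a normal subgroup is conjugation invariant. -/
lemma relindex_centralizer_conj (H : Subgroup G) [hN : H.Normal] (g k : G) :
    (Subgroup.centralizer {g⁻¹ * k * g}).relIndex H
      = (Subgroup.centralizer {k}).relIndex H := by
  set φ : G ≃* G := MulAut.conj g⁻¹ with hφ
  have hφm : ∀ a : G, φ.toMonoidHom a = g⁻¹ * a * g := by
    intro a; show φ a = _; simp [hφ, MulAut.conj_apply]
  have hφs : ∀ a : G, φ.symm.toMonoidHom a = g * a * g⁻¹ := by
    intro a
    show φ.symm a = _
    rw [MulEquiv.symm_apply_eq]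
    have h1 : φ (g * a * g⁻¹) = g⁻¹ * (g * a * g⁻¹) * g := by simp [hφ, MulAut.conj_apply]
    rw [h1]; group
  have hcent : Subgroup.centralizer {g⁻¹ * k * g}
      = Subgroup.map φ.toMonoidHom (Subgroup.centralizer {k}) := by
    ext z
    rw [memCentralizerSingleton, Subgroup.mem_map]
    constructor
    · intro hz
      refine ⟨g * z * g⁻¹, ?_, ?_⟩
      · rw [memCentralizerSingleton]
        have := congrArg (fun t => g * t * g⁻¹) hz
        simpa [mul_assoc] using this
      · rw [hφm]; group
    · rintro ⟨w, hw, rfl⟩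
      rw [memCentralizerSingleton] at hw
      rw [hφm]
      have := congrArg (fun t => g⁻¹ * t * g) hw
      simpa [mul_assoc] using this
  have hH : Subgroup.map φ.symm.toMonoidHom H = H := by
    ext a
    rw [Subgroup.mem_map]
    constructor
    · rintro ⟨h, hh, rfl⟩
      rw [hφs]
      exact hN.conj_mem h hh g
    · intro ha
      exact ⟨g⁻¹ * a * g, by simpa using hN.conj_mem a ha g⁻¹, by rw [hφs]; group⟩
  have hmc : Subgroup.map φ.toMonoidHom (Subgroup.centralizer {k})
      = Subgroup.comap φ.symm.toMonoidHom (Subgroup.centralizer {k}) := by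
    have := Subgroup.map_equiv_eq_comap_symm φ (Subgroup.centralizer {k})
    exact this
  rw [hcent, hmc, Subgroup.relIndex_comap, hH]



lemma cardCommutatorBound_pos (n : ℕ) : 0 < Subgroup.cardCommutatorBound n := by
  unfold Subgroup.cardCommutatorBound
  rcases Nat.eq_zero_or_pos n with h | h
  · subst h; simp
  · positivity

lemma cardCommutatorBound_mono : Monotone Subgroup.cardCommutatorBound := by
  intro a b hab
  rcases Nat.eq_zero_or_pos a with ha | ha
  · subst ha
    unfold Subgroup.cardCommutatorBound
    simp only [Nat.mul_zero, Nat.pow_zero, Nat.one_pow]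
    exact cardCommutatorBound_pos b
  · unfold Subgroup.cardCommutatorBound
    have h1 : 1 ≤ a := ha
    have hb1 : 1 ≤ b := le_trans h1 hab
    have hbase : a ^ (2 * a) ≤ b ^ (2 * b) :=
      le_trans (Nat.pow_le_pow_left hab _) (Nat.pow_le_pow_right hb1 (by omega))
    have hexp : a ^ (2 * a + 1) + 1 ≤ b ^ (2 * b + 1) + 1 := by
      have := le_trans (Nat.pow_le_pow_left hab (2*a+1))
        (Nat.pow_le_pow_right hb1 (show 2*a+1 ≤ 2*b+1 by omega))
      omega
    calc (a ^ (2 * a)) ^ (a ^ (2 * a + 1) + 1)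
        ≤ (b ^ (2 * b)) ^ (a ^ (2 * a + 1) + 1) := Nat.pow_le_pow_left hbase _
      _ ≤ (b ^ (2 * b)) ^ (b ^ (2 * b + 1) + 1) :=
          Nat.pow_le_pow_right (Nat.one_le_pow _ _ hb1) hexp

variable {Γ : Type} [Group Γ]

lemma central_commutator_eq (a b z w : Γ) (hz : z ∈ Subgroup.center Γ)
    (hw : w ∈ Subgroup.center Γ) : ⁅a * z, b * w⁆ = ⁅a, b⁆ := by
  have hz' := Subgroup.mem_center_iff.mp hz
  have hw' := Subgroup.mem_center_iff.mp hw
  have step1 : ⁅a * z, b * w⁆ = ⁅a, b * w⁆ := by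
    rw [commutatorElement_def, commutatorElement_def]
    calc a * z * (b * w) * (a * z)⁻¹ * (b * w)⁻¹
        = a * (z * (b * w)) * z⁻¹ * a⁻¹ * (b * w)⁻¹ := by group
      _ = a * ((b * w) * z) * z⁻¹ * a⁻¹ * (b * w)⁻¹ := by rw [← hz' (b * w)]
      _ = a * (b * w) * a⁻¹ * (b * w)⁻¹ := by group
  have step2 : ⁅a, b * w⁆ = ⁅a, b⁆ := by
    rw [commutatorElement_def, commutatorElement_def]
    calc a * (b * w) * a⁻¹ * (b * w)⁻¹
        = a * b * (w * a⁻¹) * w⁻¹ * b⁻¹ := by group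
      _ = a * b * (a⁻¹ * w) * w⁻¹ * b⁻¹ := by rw [hw' a⁻¹]
      _ = a * b * a⁻¹ * b⁻¹ := by group
  rw [step1, step2]

/-- If the center has finite index, the set of commutators is finite with cardinality at most
the square of the index. -/
lemma commutatorSet_bound (h0 : (Subgroup.center Γ).index ≠ 0) :
    Finite (commutatorSet Γ) ∧
      Nat.card (commutatorSet Γ) ≤ (Subgroup.center Γ).index ^ 2 := by
  have hfinq : Finite (Γ ⧸ Subgroup.center Γ) := by
    apply Nat.finite_of_card_ne_zero
    rwa [← Subgroup.index_eq_card]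
  set F : (Γ ⧸ Subgroup.center Γ) × (Γ ⧸ Subgroup.center Γ) → Γ := fun p =>
    Quotient.liftOn₂' p.1 p.2 (fun a b => ⁅a, b⁆) (by
      intro a₁ b₁ a₂ b₂ h₁ h₂
      rw [QuotientGroup.leftRel_apply] at h₁ h₂
      have e1 : a₂ = a₁ * (a₁⁻¹ * a₂) := by group
      have e2 : b₂ = b₁ * (b₁⁻¹ * b₂) := by group
      show ⁅a₁, b₁⁆ = ⁅a₂, b₂⁆
      rw [e1, e2, central_commutator_eq a₁ b₁ _ _ h₁ h₂]) with hF
  have hsub : commutatorSet Γ ⊆ Set.range F := by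
    rintro z ⟨g₁, g₂, rfl⟩
    exact ⟨(QuotientGroup.mk g₁, QuotientGroup.mk g₂), rfl⟩
  have := card_le_of_maps_into F (commutatorSet Γ) hsub
  refine ⟨this.1, ?_⟩
  calc Nat.card (commutatorSet Γ) ≤ Nat.card ((Γ ⧸ Subgroup.center Γ) × (Γ ⧸ Subgroup.center Γ)) :=
        this.2
    _ = (Subgroup.center Γ).index ^ 2 := by
        rw [Nat.card_prod, ← Subgroup.index_eq_card, sq]

/-- Quantitative Schur: bound on the commutator subgroup from a bound on the index
of the center. -/
lemma schur_package {c : ℕ} (h1 : (Subgroup.center Γ).index ≤ c)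
    (h0 : (Subgroup.center Γ).index ≠ 0) :
    Finite (commutator Γ) ∧
      Nat.card (commutator Γ) ≤ Subgroup.cardCommutatorBound (c ^ 2) := by
  obtain ⟨hfin, hcard⟩ := commutatorSet_bound h0
  haveI := hfin
  have h2 := Subgroup.card_commutator_le_of_finite_commutatorSet Γ
  refine ⟨inferInstance, le_trans h2 (cardCommutatorBound_mono ?_)⟩
  calc Nat.card (commutatorSet Γ) ≤ (Subgroup.center Γ).index ^ 2 := hcard
    _ ≤ c ^ 2 := Nat.pow_le_pow_left h1 2



/-- A commutative group generated by finitely many elements of exponent dividing `E`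
is finite of order at most `E ^ (number of generators)`. -/
lemma comm_group_card_le {C : Type} [CommGroup C] (S : Finset C) (E : ℕ) (hE : 0 < E)
    (hgen : Subgroup.closure (S : Set C) = ⊤) (hord : ∀ s ∈ S, s ^ E = 1) :
    Finite C ∧ Nat.card C ≤ E ^ S.card := by
  haveI : NeZero E := ⟨hE.ne'⟩
  classical
  set φ : ∀ _ : {x // x ∈ S}, Multiplicative (ZMod E) →* C := fun s =>
    { toFun := fun z => (s : C) ^ (Multiplicative.toAdd z).val
      map_one' := by
        show (s : C) ^ (Multiplicative.toAdd (1 : Multiplicative (ZMod E))).val = 1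
        simp
      map_mul' := by
        intro a b
        show (s : C) ^ (Multiplicative.toAdd a + Multiplicative.toAdd b).val = _
        rw [ZMod.val_add, ← pow_eq_pow_mod _ (hord s s.2), pow_add] } with hφ
  have hcomm : Pairwise fun i j => ∀ (x : Multiplicative (ZMod E)) (y : Multiplicative (ZMod E)),
      Commute (φ i x) (φ j y) := fun i j _ x y => Commute.all _ _
  set Φ := MonoidHom.noncommPiCoprod φ hcomm with hΦ
  have hsurj : Function.Surjective Φ := by
    rw [← MonoidHom.range_eq_top]
    rw [eq_top_iff, ← hgen, Subgroup.closure_le]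
    intro s hs
    have h1 : Φ (Pi.mulSingle (⟨s, hs⟩ : {x // x ∈ S}) (Multiplicative.ofAdd (1 : ZMod E)))
        = φ ⟨s, hs⟩ (Multiplicative.ofAdd (1 : ZMod E)) :=
      MonoidHom.noncommPiCoprod_mulSingle φ _ _
    have h2 : φ ⟨s, hs⟩ (Multiplicative.ofAdd (1 : ZMod E)) = s := by
      show s ^ (Multiplicative.toAdd (Multiplicative.ofAdd (1 : ZMod E))).val = s
      rw [toAdd_ofAdd, ZMod.val_one_eq_one_mod, ← pow_eq_pow_mod _ (hord s hs), pow_one]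
    exact ⟨_, h1.trans h2⟩
  have hfin : Finite C := Finite.of_surjective Φ hsurj
  refine ⟨hfin, ?_⟩
  have hcard : Nat.card C ≤ Nat.card (∀ _ : {x // x ∈ S}, Multiplicative (ZMod E)) :=
    Nat.card_le_card_of_surjective Φ hsurj
  calc Nat.card C ≤ Nat.card (∀ _ : {x // x ∈ S}, Multiplicative (ZMod E)) := hcard
    _ = E ^ S.card := by
      rw [Nat.card_pi]
      have h3 : Nat.card (Multiplicative (ZMod E)) = E := by
        rw [Nat.card_congr Multiplicative.toAdd, Nat.card_zmod]
      simp only [h3, Finset.prod_const, Finset.card_univ, Fintype.card_coe]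



variable {G : Type} [Group G]

/-- If all `N`-conjugates of `b` lie in a finite set `A`, then the centralizer of `b`
has relative index at most `|A|` in `N`. -/
lemma relindex_centralizer_le {N : Subgroup G} {b : G} {A : Set G} (hAfin : A.Finite)
    (hcls : ∀ g ∈ N, g * b * g⁻¹ ∈ A) :
    (Subgroup.centralizer {b}).relIndex N ≠ 0 ∧
      (Subgroup.centralizer {b}).relIndex N ≤ Nat.card A := by
  haveI := hAfin.to_subtype
  set f : (↥N ⧸ (Subgroup.centralizer {b}).subgroupOf N) → ↥A := fun q =>
    Quotient.liftOn' q (fun g => (⟨(g : G) * b * (g : G)⁻¹, hcls g g.2⟩ : ↥A)) (by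
      intro g₁ g₂ hr
      rw [QuotientGroup.leftRel_apply, Subgroup.mem_subgroupOf] at hr
      have hc : b * ((g₁⁻¹ * g₂ : ↥N) : G) = ((g₁⁻¹ * g₂ : ↥N) : G) * b :=
        memCentralizerSingleton.mp hr
      apply Subtype.ext
      show (g₁ : G) * b * (g₁ : G)⁻¹ = (g₂ : G) * b * (g₂ : G)⁻¹
      set c : G := ((g₁⁻¹ * g₂ : ↥N) : G) with hcdef
      have h2 : (g₂ : G) = (g₁ : G) * c := by simp [hcdef, mul_assoc]
      have hcb : c * b * c⁻¹ = b := by rw [mul_inv_eq_iff_eq_mul, ← hc]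
      rw [h2]
      calc (g₁ : G) * b * (g₁ : G)⁻¹ = (g₁ : G) * (c * b * c⁻¹) * (g₁ : G)⁻¹ := by rw [hcb]
        _ = (g₁ : G) * c * b * ((g₁ : G) * c)⁻¹ := by group) with hf
  have hinj : Function.Injective f := by
    intro q₁ q₂ h
    induction q₁ using Quotient.inductionOn' with
    | h g₁ =>
    induction q₂ using Quotient.inductionOn' with
    | h g₂ =>
    have h' : (g₁ : G) * b * (g₁ : G)⁻¹ = (g₂ : G) * b * (g₂ : G)⁻¹ := by
      have := congrArg Subtype.val h
      exact this
    apply Quotient.sound'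
    rw [QuotientGroup.leftRel_apply, Subgroup.mem_subgroupOf]
    rw [memCentralizerSingleton]
    show b * ((g₁⁻¹ * g₂ : ↥N) : G) = ((g₁⁻¹ * g₂ : ↥N) : G) * b
    push_cast
    have := congrArg (fun t => (g₁ : G)⁻¹ * t * (g₂ : G)) h'
    simpa [mul_assoc] using this
  have hfin : Finite (↥N ⧸ (Subgroup.centralizer {b}).subgroupOf N) := Finite.of_injective f hinj
  constructor
  · rw [← card_quot_eq_relindex N (Subgroup.centralizer {b})]
    haveI : Nonempty (↥N ⧸ (Subgroup.centralizer {b}).subgroupOf N) := ⟨QuotientGroup.mk 1⟩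
    exact Nat.card_pos.ne'
  · rw [← card_quot_eq_relindex N (Subgroup.centralizer {b})]
    exact Nat.card_le_card_of_injective f hinj


variable {G : Type} [Group G]

/-- A commutator of two elements whose centralizers have small relative index in `H`
has bounded order. -/
lemma basic_comm_order {H : Subgroup G} {m : ℕ} {y x : G} (hy : y ∈ H) (hx : x ∈ H)
    (hry0 : (Subgroup.centralizer {y}).relIndex H ≠ 0)
    (hrym : (Subgroup.centralizer {y}).relIndex H ≤ m)
    (hrx0 : (Subgroup.centralizer {x}).relIndex H ≠ 0)
    (hrxm : (Subgroup.centralizer {x}).relIndex H ≤ m) :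
    ⁅y, x⁆ ^ (Subgroup.cardCommutatorBound ((m * m) ^ 2)).factorial = 1 := by
  set R : Subgroup G := Subgroup.closure {y, x} with hR
  have hyR : y ∈ R := Subgroup.subset_closure (by simp)
  have hxR : x ∈ R := Subgroup.subset_closure (by simp)
  have hRH : R ≤ H := by
    rw [hR, Subgroup.closure_le]
    intro a ha
    rcases ha with rfl | ha
    · exact hy
    · rw [Set.mem_singleton_iff] at ha; subst ha; exact hx
  set Z : Subgroup G := Subgroup.centralizer {y} ⊓ Subgroup.centralizer {x} with hZ
  have hZH0 : Z.relIndex H ≠ 0 := Subgroup.relIndex_inf_ne_zero hry0 hrx0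
  have hZHm : Z.relIndex H ≤ m * m :=
    le_trans Subgroup.relIndex_inf_le (Nat.mul_le_mul hrym hrxm)
  have hZR0 : Z.relIndex R ≠ 0 := fun h => hZH0 (Subgroup.relIndex_eq_zero_of_le_right hRH h)
  have hZRm : Z.relIndex R ≤ m * m :=
    le_trans (Subgroup.relIndex_le_of_le_right hRH hZH0) hZHm
  -- the center of R contains Z ∩ R
  have hcen : Z.subgroupOf R ≤ Subgroup.center ↥R := by
    rw [hR]
    apply subgroupOf_le_center_of_commute
    intro b hb z hz
    rw [hZ, Subgroup.mem_inf] at hz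
    rcases hb with rfl | hb
    · exact memCentralizerSingleton.mp hz.1
    · rw [Set.mem_singleton_iff] at hb; subst hb
      exact memCentralizerSingleton.mp hz.2
  have hind : (Subgroup.center ↥R).index ∣ (Z.subgroupOf R).index :=
    Subgroup.index_dvd_of_le hcen
  have hZRind : (Z.subgroupOf R).index = Z.relIndex R := rfl
  have hZind0 : (Z.subgroupOf R).index ≠ 0 := by rwa [hZRind]
  have hcind0 : (Subgroup.center ↥R).index ≠ 0 := by
    intro h
    rw [h] at hind
    exact hZind0 (zero_dvd_iff.mp hind)
  have hcindm : (Subgroup.center ↥R).index ≤ m * m :=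
    le_trans (Nat.le_of_dvd (Nat.pos_of_ne_zero hZind0) hind) (hZRind ▸ hZRm)
  obtain ⟨hCfin, hCcard⟩ := schur_package hcindm hcind0
  haveI := hCfin
  -- the commutator of the two generators lies in the commutator subgroup
  have hmem : ⁅(⟨y, hyR⟩ : ↥R), (⟨x, hxR⟩ : ↥R)⁆ ∈ commutator ↥R := by
    rw [commutator_eq_closure]
    exact Subgroup.subset_closure (commutator_mem_commutatorSet _ _)
  set t : ↥(commutator ↥R) := ⟨⁅(⟨y, hyR⟩ : ↥R), (⟨x, hxR⟩ : ↥R)⁆, hmem⟩ with ht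
  have hpow : t ^ (Nat.card ↥(commutator ↥R)) = 1 := pow_card_eq_one'
  have hGpow : ⁅y, x⁆ ^ (Nat.card ↥(commutator ↥R)) = 1 := by
    have hco : ((t : ↥R) : G) = ⁅y, x⁆ := by
      simp [ht, commutatorElement_def]
    have h1 : (t : ↥R) ^ (Nat.card ↥(commutator ↥R)) = 1 := by
      rw [← Subgroup.coe_pow, hpow]
      rfl
    have h2 : ((t : ↥R) : G) ^ (Nat.card ↥(commutator ↥R)) = 1 := by
      rw [← Subgroup.coe_pow, h1]
      rfl
    rwa [hco] at h2
  have hc0 : 0 < Nat.card ↥(commutator ↥R) := Nat.card_pos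
  have hdvd : Nat.card ↥(commutator ↥R) ∣
      (Subgroup.cardCommutatorBound ((m * m) ^ 2)).factorial :=
    Nat.dvd_factorial hc0 hCcard
  obtain ⟨d, hd⟩ := hdvd
  rw [hd, pow_mul, hGpow, one_pow]



/-- Bound for the order of the subgroup generated by one conjugacy class in Dietzmann's lemma. -/
def SB (k : ℕ) : ℕ := Subgroup.cardCommutatorBound ((k ^ k) ^ 2) * k

def DF (E : ℕ) : ℕ → ℕ
  | 0 => 1
  | (k+1) => DF E k * (Subgroup.cardCommutatorBound (((k+1) ^ (k+1)) ^ 2) * E ^ (k+1))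

lemma DF_pos (E : ℕ) (hE : 0 < E) : ∀ k, 0 < DF E k
  | 0 => Nat.one_pos
  | (k+1) => Nat.mul_pos (DF_pos E hE k)
      (Nat.mul_pos (cardCommutatorBound_pos _) (Nat.pow_pos hE))

/-- Dietzmann's lemma, quantitative form. -/
lemma dietzmann (E : ℕ) (hE : 0 < E) :
    ∀ (k : ℕ) (G : Type) (_ : Group G) (V : Set G),
      V.Finite → Nat.card V ≤ k →
      (∀ g ∈ Subgroup.closure V, ∀ v ∈ V, g * v * g⁻¹ ∈ V) →
      (∀ v ∈ V, v ^ E = 1) →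
      Finite (Subgroup.closure V) ∧ Nat.card (Subgroup.closure V) ≤ DF E k := by
  intro k
  induction k with
  | zero =>
    intro G _ V hVfin hVcard _ _
    have hV : V = ∅ := by
      rw [← Set.ncard_eq_zero hVfin]
      rw [Nat.card_coe_set_eq] at hVcard
      omega
    subst hV
    rw [Subgroup.closure_empty]
    refine ⟨?_, ?_⟩
    · exact Nat.finite_of_card_ne_zero (by rw [Subgroup.card_bot]; omega)
    · rw [Subgroup.card_bot]; exact le_refl _
  | succ k ih =>
    intro G instG V hVfin hVcard hconj horder
    rcases V.eq_empty_or_nonempty with hV | ⟨a, ha⟩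
    · subst hV
      rw [Subgroup.closure_empty]
      refine ⟨Nat.finite_of_card_ne_zero (by rw [Subgroup.card_bot]; omega), ?_⟩
      rw [Subgroup.card_bot]
      exact DF_pos E hE (k+1)
    · set T := Subgroup.closure V with hT
      set A : Set G := {w | ∃ g ∈ T, w = g * a * g⁻¹} with hA
      have hAsubV : A ⊆ V := by
        rintro w ⟨g, hg, rfl⟩
        exact hconj g hg a ha
      have haA : a ∈ A := ⟨1, one_mem T, by group⟩
      have hAfin : A.Finite := hVfin.subset hAsubV
      haveI := hAfin.to_subtype
      haveI : Nonempty ↥A := ⟨⟨a, haA⟩⟩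
      have hconjA : ∀ g ∈ T, ∀ b ∈ A, g * b * g⁻¹ ∈ A := by
        rintro g hg b ⟨g', hg', rfl⟩
        exact ⟨g * g', mul_mem hg hg', by group⟩
      set N := Subgroup.closure A with hN
      have hNT : N ≤ T := by
        rw [hN, Subgroup.closure_le]
        exact subset_trans hAsubV Subgroup.subset_closure
      have hconjN : ∀ g ∈ T, ∀ w ∈ N, g * w * g⁻¹ ∈ N := by
        intro g hg w hw
        rw [hN]
        exact conj_mem_closure_of g
          (fun v hv => Subgroup.subset_closure (hconjA g hg v hv)) (hN ▸ hw)
      have hclsb : ∀ b ∈ A, ∀ g ∈ N, g * b * g⁻¹ ∈ A :=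
        fun b hb g hg => hconjA g (hNT hg) b hb
      have hA1 : 1 ≤ Nat.card ↥A := Nat.card_pos
      have hAk : Nat.card ↥A ≤ k + 1 := by
        rw [Nat.card_coe_set_eq]
        calc A.ncard ≤ V.ncard := Set.ncard_le_ncard hAsubV hVfin
          _ ≤ k + 1 := by rw [← Nat.card_coe_set_eq]; exact hVcard
      have hrel : ∀ b ∈ A, (Subgroup.centralizer {b}).relIndex N ≠ 0 ∧
          (Subgroup.centralizer {b}).relIndex N ≤ Nat.card ↥A :=
        fun b hb => relindex_centralizer_le hAfin (fun g hg => hclsb b hb g hg)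
      haveI : Fintype ↥A := hAfin.fintype
      set Z : Subgroup G := ⨅ b : ↥A, Subgroup.centralizer {(b : G)} with hZ
      have hZ0 : Z.relIndex N ≠ 0 :=
        Subgroup.relIndex_iInf_ne_zero (fun b => (hrel b b.2).1)
      have hZle : Z.relIndex N ≤ (Nat.card ↥A) ^ (Nat.card ↥A) := by
        refine le_trans (Subgroup.relIndex_iInf_le _) ?_
        have := Finset.prod_le_pow_card Finset.univ
          (fun b : ↥A => (Subgroup.centralizer {(b : G)}).relIndex N) (Nat.card ↥A)
          (fun b _ => (hrel b b.2).2)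
        rwa [Finset.card_univ, ← Nat.card_eq_fintype_card] at this
      have hcenN : Z.subgroupOf N ≤ Subgroup.center ↥N := by
        rw [hN]
        apply subgroupOf_le_center_of_commute
        intro b hb z hz
        have hzb : z ∈ Subgroup.centralizer {b} := by
          rw [hZ] at hz
          exact Subgroup.mem_iInf.mp hz ⟨b, hb⟩
        exact memCentralizerSingleton.mp hzb
      have hind : (Subgroup.center ↥N).index ∣ (Z.subgroupOf N).index :=
        Subgroup.index_dvd_of_le hcenN
      have hZind : (Z.subgroupOf N).index = Z.relIndex N := rfl
      have hZind0 : (Z.subgroupOf N).index ≠ 0 := by rwa [hZind]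
      have hcind0 : (Subgroup.center ↥N).index ≠ 0 := by
        intro h
        rw [h] at hind
        exact hZind0 (zero_dvd_iff.mp hind)
      have hcindle : (Subgroup.center ↥N).index ≤ (Nat.card ↥A) ^ (Nat.card ↥A) :=
        le_trans (Nat.le_of_dvd (Nat.pos_of_ne_zero hZind0) hind) (hZind ▸ hZle)
      obtain ⟨hCfin, hCcard⟩ := schur_package hcindle hcind0
      haveI := hCfin
      have hCcard' : Nat.card ↥(commutator ↥N) ≤
          Subgroup.cardCommutatorBound (((k+1) ^ (k+1)) ^ 2) := by
        refine le_trans hCcard (cardCommutatorBound_mono ?_)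
        have hbase : (Nat.card ↥A) ^ (Nat.card ↥A) ≤ (k+1) ^ (k+1) :=
          le_trans (Nat.pow_le_pow_left hAk _) (Nat.pow_le_pow_right (by omega) hAk)
        exact Nat.pow_le_pow_left hbase 2
      -- abelianization of N
      have hofsurj : Function.Surjective (Abelianization.of : ↥N →* Abelianization ↥N) :=
        fun q => Quot.inductionOn q (fun g => ⟨g, (Abelianization.mk_eq_of g).symm⟩)
      set preA : Set ↥N := (N.subtype) ⁻¹' A with hpreA
      have hpregen : Subgroup.closure preA = ⊤ := by
        rw [hpreA, hN]
        exact Subgroup.closure_preimage_eq_top A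
      set SAb : Set (Abelianization ↥N) := (Abelianization.of : ↥N →* Abelianization ↥N) '' preA
        with hSAb
      have hSgen : Subgroup.closure SAb = ⊤ := by
        rw [hSAb, ← MonoidHom.map_closure, hpregen, ← MonoidHom.range_eq_map]
        exact MonoidHom.range_eq_top.mpr hofsurj
      have hSord : ∀ s ∈ SAb, s ^ E = 1 := by
        rintro s ⟨b, hb, rfl⟩
        rw [← map_pow]
        have hbE : b ^ E = 1 := by
          apply Subtype.ext
          simp only [Subgroup.coe_pow, OneMemClass.coe_one]
          exact horder _ (hAsubV hb)
        rw [hbE, map_one]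
      have hpreAfin : preA.Finite :=
        Set.Finite.preimage (Set.injOn_of_injective Subtype.val_injective) hAfin
      have hSfin : SAb.Finite := hpreAfin.image _
      have hScard : SAb.ncard ≤ Nat.card ↥A := by
        have h1 : SAb.ncard ≤ preA.ncard := Set.ncard_image_le hpreAfin
        have h2 : preA.ncard ≤ A.ncard := by
          rw [← Set.ncard_image_of_injective preA Subtype.val_injective]
          exact Set.ncard_le_ncard (Set.image_preimage_subset _ _) hAfin
        rw [Nat.card_coe_set_eq]
        omega
      obtain ⟨hAbfin, hAbcard⟩ := comm_group_card_le hSfin.toFinset E hE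
        (by rw [Set.Finite.coe_toFinset]; exact hSgen)
        (by intro s hs; rw [Set.Finite.mem_toFinset] at hs; exact hSord s hs)
      have hAbcard' : Nat.card (Abelianization ↥N) ≤ E ^ (k + 1) := by
        refine le_trans hAbcard (Nat.pow_le_pow_right hE ?_)
        rw [← Set.ncard_eq_toFinset_card SAb hSfin]
        omega
      -- combine: order of N
      have hNeq : Nat.card ↥N = Nat.card ↥(commutator ↥N) * (commutator ↥N).index :=
        (Subgroup.card_mul_index (commutator ↥N)).symm
      have hidxeq : (commutator ↥N).index = Nat.card (Abelianization ↥N) :=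
        Subgroup.index_eq_card _
      haveI := hAbfin
      have hNcard : Nat.card ↥N ≤
          Subgroup.cardCommutatorBound (((k+1) ^ (k+1)) ^ 2) * E ^ (k+1) := by
        rw [hNeq, hidxeq]
        exact Nat.mul_le_mul hCcard' hAbcard'
      have hNfin : Finite ↥N := by
        apply Nat.finite_of_card_ne_zero
        rw [hNeq, hidxeq]
        have h1 : 0 < Nat.card ↥(commutator ↥N) := Nat.card_pos
        have h2 : 0 < Nat.card (Abelianization ↥N) := Nat.card_pos
        positivity
      -- quotient step
      haveI hNTnormal : (N.subgroupOf T).Normal := by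
        constructor
        intro n hn g
        rw [Subgroup.mem_subgroupOf] at hn ⊢
        push_cast
        exact hconjN (g : G) g.2 (n : G) hn
      set π := QuotientGroup.mk' (N.subgroupOf T) with hπ
      set preV : Set ↥T := T.subtype ⁻¹' V with hpreV
      have hpreVgen : Subgroup.closure preV = ⊤ := by
        rw [hpreV, hT]
        exact Subgroup.closure_preimage_eq_top V
      set W : Set (↥T ⧸ N.subgroupOf T) := π '' (T.subtype ⁻¹' (V \ A)) with hW
      have hWgen : Subgroup.closure W = ⊤ := by
        have h1 : Subgroup.closure (π '' preV) = ⊤ := by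
          rw [← MonoidHom.map_closure, hpreVgen, ← MonoidHom.range_eq_map]
          exact MonoidHom.range_eq_top.mpr (QuotientGroup.mk'_surjective _)
        rw [eq_top_iff, ← h1, Subgroup.closure_le]
        rintro _ ⟨v, hv, rfl⟩
        by_cases hvA : (v : G) ∈ A
        · have hv1 : π v = 1 := by
            rw [hπ, QuotientGroup.mk'_apply, QuotientGroup.eq_one_iff]
            rw [Subgroup.mem_subgroupOf]
            exact (hN ▸ Subgroup.subset_closure hvA)
          rw [hv1]
          exact one_mem _
        · exact Subgroup.subset_closure ⟨v, ⟨hv, hvA⟩, rfl⟩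
      have hWconj : ∀ γ ∈ Subgroup.closure W, ∀ w ∈ W, γ * w * γ⁻¹ ∈ W := by
        intro γ _ w hw
        obtain ⟨g, rfl⟩ := QuotientGroup.mk'_surjective (N.subgroupOf T) γ
        obtain ⟨v, hv, rfl⟩ := hw
        refine ⟨g * v * g⁻¹, ⟨?_, ?_⟩, by rw [map_mul, map_mul, map_inv]⟩
        · show ((g * v * g⁻¹ : ↥T) : G) ∈ V
          push_cast
          exact hconj (g : G) g.2 (v : G) hv.1
        · show ((g * v * g⁻¹ : ↥T) : G) ∉ A
          push_cast
          intro hmem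
          apply hv.2
          have := hconjA (g : G)⁻¹ (inv_mem g.2) _ hmem
          have heq : (g : G)⁻¹ * ((g : G) * (v : G) * (g : G)⁻¹) * ((g : G)⁻¹)⁻¹ = (v : G) := by
            group
          rwa [heq] at this
      have hWord : ∀ w ∈ W, w ^ E = 1 := by
        rintro _ ⟨v, hv, rfl⟩
        rw [← map_pow]
        have hvE : v ^ E = 1 := by
          apply Subtype.ext
          simp only [Subgroup.coe_pow, OneMemClass.coe_one]
          exact horder _ hv.1
        rw [hvE, map_one]
      have hpreWfin : (T.subtype ⁻¹' (V \ A)).Finite :=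
        Set.Finite.preimage (Set.injOn_of_injective Subtype.val_injective)
          (hVfin.diff (t := A))
      have hWfin : W.Finite := hpreWfin.image _
      have hWcard : Nat.card ↥W ≤ k := by
        rw [Nat.card_coe_set_eq]
        have h1 : W.ncard ≤ (T.subtype ⁻¹' (V \ A)).ncard := Set.ncard_image_le hpreWfin
        have h2 : (T.subtype ⁻¹' (V \ A)).ncard ≤ (V \ A).ncard := by
          rw [← Set.ncard_image_of_injective _ Subtype.val_injective]
          exact Set.ncard_le_ncard (Set.image_preimage_subset _ _) (hVfin.diff (t := A))
        have h3 : (V \ A).ncard = V.ncard - A.ncard := Set.ncard_diff hAsubV hAfin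
        have h4 : 1 ≤ A.ncard := by rw [← Nat.card_coe_set_eq]; exact hA1

        have h5 : V.ncard ≤ k + 1 := by
          rw [← Nat.card_coe_set_eq]; exact hVcard
        omega
      obtain ⟨hΓclfin, hΓclcard⟩ := ih (↥T ⧸ N.subgroupOf T) inferInstance W hWfin hWcard
        hWconj hWord
      have hΓfin : Finite (↥T ⧸ N.subgroupOf T) := by
        rw [hWgen] at hΓclfin
        exact Finite.of_equiv _ Subgroup.topEquiv.toEquiv
      have hΓcard : Nat.card (↥T ⧸ N.subgroupOf T) ≤ DF E k := by
        rw [hWgen] at hΓclcard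
        rwa [Nat.card_congr Subgroup.topEquiv.toEquiv] at hΓclcard
      -- final assembly
      have hTeq : Nat.card ↥T = Nat.card ↥(N.subgroupOf T) * (N.subgroupOf T).index :=
        (Subgroup.card_mul_index (N.subgroupOf T)).symm
      have hsub : Nat.card ↥(N.subgroupOf T) = Nat.card ↥N :=
        Nat.card_congr (Subgroup.subgroupOfEquivOfLe hNT).toEquiv
      have hidx : (N.subgroupOf T).index = Nat.card (↥T ⧸ N.subgroupOf T) :=
        Subgroup.index_eq_card _
      constructor
      · apply Nat.finite_of_card_ne_zero
        rw [hTeq, hsub, hidx]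
        have h1 : 0 < Nat.card ↥N := Nat.card_pos
        have h2 : 0 < Nat.card (↥T ⧸ N.subgroupOf T) := Nat.card_pos
        positivity
      · show Nat.card ↥T ≤ DF E (k + 1)
        rw [hTeq, hsub, hidx]
        calc Nat.card ↥N * Nat.card (↥T ⧸ N.subgroupOf T)
            ≤ (Subgroup.cardCommutatorBound (((k+1) ^ (k+1)) ^ 2) * E ^ (k+1)) * DF E k :=
              Nat.mul_le_mul hNcard hΓcard
          _ = DF E (k + 1) := by rw [Nat.mul_comm]; rfl

end Stmt2Aux

open Stmt2Aux

/-- Under Hypothesis 2.3: if `|x^G| ≤ n` for all `x ∈ K`, `H = ⟨K^G⟩`,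
`X` is the set of all conjugates of elements of `K`, and `m` is the maximum of the
indices `[H : C_H(x)]` for `x ∈ K`, then for any `x ∈ X` the subgroup `[H, x]`
has finite `m`-bounded order. -/
theorem stmt_2 :
    ∃ f : ℕ → ℕ, ∀ n : ℕ, ∀ (G : Type) [Group G] (K : Subgroup G),
      (∀ x ∈ K, (conjugatesOf x).Finite ∧ Nat.card (conjugatesOf x) ≤ n) →
      ∀ (H : Subgroup G), H = Subgroup.normalClosure (K : Set G) →
      ∀ (X : Set G), X = {x | ∃ g : G, ∃ k ∈ K, x = g⁻¹ * k * g} →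
      ∀ m : ℕ,
        (∀ x ∈ K, 0 < (Subgroup.centralizer {x}).relIndex H ∧
          (Subgroup.centralizer {x}).relIndex H ≤ m) →
        (∃ a ∈ K, (Subgroup.centralizer {a}).relIndex H = m) →
      ∀ x ∈ X,
        Finite (Subgroup.closure {z | ∃ h ∈ H, z = ⁅h, x⁆}) ∧
        Nat.card (Subgroup.closure {z | ∃ h ∈ H, z = ⁅h, x⁆}) ≤ f m := by
  refine ⟨fun m => DF ((Subgroup.cardCommutatorBound ((m * m) ^ 2)).factorial) (m * m), ?_⟩
  intro n G instG K _ H hH X hX m hm _ x hx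
  subst hH
  subst hX
  set Hn : Subgroup G := Subgroup.normalClosure (K : Set G) with hHn
  haveI : Hn.Normal := Subgroup.normalClosure_normal
  set E : ℕ := (Subgroup.cardCommutatorBound ((m * m) ^ 2)).factorial with hEdef
  have hEpos : 0 < E := Nat.factorial_pos _
  set Xs : Set G := {x | ∃ g : G, ∃ k ∈ K, x = g⁻¹ * k * g} with hXs
  have hXmem : ∀ y ∈ Xs, y ∈ Hn := by
    rintro y ⟨g, k, hk, rfl⟩
    have hk' : k ∈ Hn := Subgroup.subset_normalClosure hk
    simpa using (Subgroup.normalClosure_normal).conj_mem k hk' g⁻¹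
  have hXrel : ∀ y ∈ Xs, (Subgroup.centralizer {y}).relIndex Hn ≠ 0 ∧
      (Subgroup.centralizer {y}).relIndex Hn ≤ m := by
    rintro y ⟨g, k, hk, rfl⟩
    rw [relindex_centralizer_conj Hn g k]
    exact ⟨(hm k hk).1.ne', (hm k hk).2⟩
  have hxH : x ∈ Hn := hXmem x hx
  have hxrel := hXrel x hx
  set S₀ : Set G := {z | ∃ h ∈ Hn, z = ⁅h, x⁆} with hS₀
  have hS₀H : S₀ ⊆ (Hn : Set G) := by
    rintro z ⟨h, hh, rfl⟩
    rw [commutatorElement_def]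
    exact mul_mem (mul_mem (mul_mem hh hxH) (inv_mem hh)) (inv_mem hxH)
  set T : Subgroup G := Subgroup.closure S₀ with hTdef
  have hTH : T ≤ Hn := by rw [hTdef, Subgroup.closure_le]; exact hS₀H
  -- the finite coset space
  haveI hQfin : Finite (↥Hn ⧸ (Subgroup.centralizer {x}).subgroupOf Hn) :=
    finite_quot_of_relindex_ne_zero Hn (Subgroup.centralizer {x}) hxrel.1
  set Θ : (↥Hn ⧸ (Subgroup.centralizer {x}).subgroupOf Hn) ×
      (↥Hn ⧸ (Subgroup.centralizer {x}).subgroupOf Hn) → G :=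
    fun p => commMap Hn x p.1 * (commMap Hn x p.2)⁻¹ with hΘ
  set V : Set G := {w | ∃ h ∈ Hn, ∃ y ∈ Xs, w = h * ⁅y, x⁆ * h⁻¹} with hV
  have hVrange : V ⊆ Set.range Θ := by
    rintro w ⟨h, hh, y, hy, rfl⟩
    have hyH : y ∈ Hn := hXmem y hy
    refine ⟨(QuotientGroup.mk ⟨h * y, mul_mem hh hyH⟩, QuotientGroup.mk ⟨h, hh⟩), ?_⟩
    show commMap Hn x (QuotientGroup.mk ⟨h * y, _⟩) * (commMap Hn x (QuotientGroup.mk ⟨h, hh⟩))⁻¹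
      = h * ⁅y, x⁆ * h⁻¹
    rw [commMap_mk, commMap_mk]
    show ⁅h * y, x⁆ * ⁅h, x⁆⁻¹ = h * ⁅y, x⁆ * h⁻¹
    rw [commutatorElement_def, commutatorElement_def, commutatorElement_def]
    group
  obtain ⟨hVfin, hVcard⟩ := card_le_of_maps_into Θ V hVrange
  have hVcard' : Nat.card ↥V ≤ m * m := by
    refine le_trans hVcard ?_
    rw [Nat.card_prod]
    rw [card_quot_eq_relindex Hn (Subgroup.centralizer {x})]
    exact Nat.mul_le_mul hxrel.2 hxrel.2
  have hVsubT : V ⊆ (T : Set G) := by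
    rintro w ⟨h, hh, y, hy, rfl⟩
    have hyH : y ∈ Hn := hXmem y hy
    have hw : h * ⁅y, x⁆ * h⁻¹ = ⁅h * y, x⁆ * ⁅h, x⁆⁻¹ := by
      rw [commutatorElement_def, commutatorElement_def, commutatorElement_def]
      group
    rw [hw]
    exact mul_mem (Subgroup.subset_closure ⟨h * y, mul_mem hh hyH, rfl⟩)
      (inv_mem (Subgroup.subset_closure ⟨h, hh, rfl⟩))
  have hVconjH : ∀ g ∈ Hn, ∀ v ∈ V, g * v * g⁻¹ ∈ V := by
    intro g hg v hv
    obtain ⟨h, hh, y, hy, rfl⟩ := hv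
    exact ⟨g * h, mul_mem hg hh, y, hy, by group⟩
  have hclconj : ∀ g ∈ Hn, ∀ w ∈ Subgroup.closure V, g * w * g⁻¹ ∈ Subgroup.closure V :=
    fun g hg w hw => conj_mem_closure_of g
      (fun v hv => Subgroup.subset_closure (hVconjH g hg v hv)) hw
  have hordV : ∀ v ∈ V, v ^ E = 1 := by
    rintro v ⟨h, hh, y, hy, rfl⟩
    have hbase : ⁅y, x⁆ ^ E = 1 :=
      basic_comm_order (hXmem y hy) hxH (hXrel y hy).1 (hXrel y hy).2 hxrel.1 hxrel.2
    have h1 : h * ⁅y, x⁆ * h⁻¹ = (MulAut.conj h) ⁅y, x⁆ := by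
      rw [MulAut.conj_apply]
    rw [h1, ← map_pow, hbase, map_one]
  -- closure V = T
  have hkey : ∀ h : G, h ∈ Subgroup.closure (Group.conjugatesOfSet (K : Set G)) →
      ⁅h, x⁆ ∈ Subgroup.closure V := by
    intro h hh
    induction hh using Subgroup.closure_induction with
    | mem y hy =>
      obtain ⟨a, haK, hconj⟩ := Group.mem_conjugatesOfSet_iff.mp hy
      obtain ⟨c, hc⟩ := isConj_iff.mp hconj
      have hyX : y ∈ Xs := ⟨c⁻¹, a, haK, by rw [← hc]; group⟩
      refine Subgroup.subset_closure ⟨1, one_mem Hn, y, hyX, by group⟩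
    | one =>
      have h1 : ⁅(1 : G), x⁆ = 1 := by rw [commutatorElement_def]; group
      rw [h1]; exact one_mem _
    | mul a b haH hbH ha' hb' =>
      have haHn : a ∈ Hn := haH
      have hid : ⁅a * b, x⁆ = a * ⁅b, x⁆ * a⁻¹ * ⁅a, x⁆ := by
        rw [commutatorElement_def, commutatorElement_def, commutatorElement_def]
        group
      rw [hid]
      exact mul_mem (hclconj a haHn _ hb') ha'
    | inv a haH ha' =>
      have haHn : a ∈ Hn := haH
      have hid : ⁅a⁻¹, x⁆ = a⁻¹ * ⁅a, x⁆⁻¹ * a := by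
        rw [commutatorElement_def, commutatorElement_def]
        group
      rw [hid]
      have := hclconj a⁻¹ (inv_mem haHn) _ (inv_mem ha')
      simpa using this
  have hTeqV : Subgroup.closure V = T := by
    apply le_antisymm
    · rw [Subgroup.closure_le]; exact hVsubT
    · rw [hTdef, Subgroup.closure_le]
      rintro z ⟨h, hh, rfl⟩
      exact hkey h hh
  obtain ⟨hfin, hcard⟩ := dietzmann E hEpos (m * m) G instG V hVfin hVcard'
    (by rw [hTeqV]; intro g hg v hv; exact hVconjH g (hTH hg) v hv) hordV
  rw [hTeqV] at hfin hcard
  exact ⟨hfin, hcard⟩
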